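/- If a finite simple graph G has a proper interval representation (intervals, none properly containing another, with adjacency given by intersection), then G admits a proper interval ordering. -/

import Mathlib

open SimpleGraph

/-- `σ` is a proper interval ordering of `G`: whenever `σ u < σ v < σ w` and
`{u,w}` is an edge, both `{u,v}` and `{v,w}` are edges. -/
def IsPIO {V : Type*} {n : ℕ} (G : SimpleGraph V) (σ : V ≃ Fin n) : Prop :=
  ∀ u v w : V, σ u < σ v → σ v < σ w → G.Adj u w → G.Adj u v ∧ G.Adj v w

/-- `G` admits a proper interval ordering. -/
def HasPIO {V : Type*} [Fintype V] (G : SimpleGraph V) : Prop :=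
  ∃ σ : V ≃ Fin (Fintype.card V), IsPIO G σ

/-- Chordal: no induced cycle of length ≥ 4. -/
def Chordal {V : Type*} (G : SimpleGraph V) : Prop :=
  ∀ n : ℕ, 4 ≤ n → IsEmpty (cycleGraph n ↪g G)

/-- The claw `K_{1,3}`. -/
def clawGraph : SimpleGraph (Fin 4) :=
  fromEdgeSet {s(0,1), s(0,2), s(0,3)}

/-- The net: a triangle `0,1,2` with pendant vertices `3,4,5`. -/
def netGraph : SimpleGraph (Fin 6) :=
  fromEdgeSet {s(0,1), s(1,2), s(0,2), s(0,3), s(1,4), s(2,5)}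

/-- The tent (3-sun): inner triangle `0,1,2`, outer vertices `3,4,5`. -/
def tentGraph : SimpleGraph (Fin 6) :=
  fromEdgeSet {s(0,1), s(1,2), s(0,2), s(3,0), s(3,1), s(4,1), s(4,2), s(5,2), s(5,0)}

/-- A longest shortest path: a shortest path between two vertices at maximal distance. -/
def IsLongestShortestPath {V : Type*} (G : SimpleGraph V) {u w : V} (p : G.Walk u w) : Prop :=
  p.IsPath ∧ p.length = G.dist u w ∧ ∀ a b : V, G.dist a b ≤ G.dist u w

/-- Narrow: every vertex lies on, or is adjacent to a vertex of, every longest shortest path. -/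
def Narrow {V : Type*} (G : SimpleGraph V) : Prop :=
  ∀ (v u w : V) (p : G.Walk u w), IsLongestShortestPath G p →
    v ∈ p.support ∨ ∃ x ∈ p.support, G.Adj v x

theorem properIntervalRep_hasPIO {V : Type*} [Fintype V] (G : SimpleGraph V)
    (l r : V → ℝ) (hlr : ∀ v, l v ≤ r v)
    (hproper : ∀ u v : V, ¬ Set.Icc (l u) (r u) ⊂ Set.Icc (l v) (r v))
    (hadj : ∀ u v : V, u ≠ v →
      (G.Adj u v ↔ (Set.Icc (l u) (r u) ∩ Set.Icc (l v) (r v)).Nonempty)) :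
    HasPIO G := by
  classical
  have mono : ∀ u v : V, l u ≤ l v → r u ≤ r v := by
    intro u v h
    by_contra hr
    push_neg at hr
    apply hproper v u
    refine lt_of_le_of_ne (Set.Icc_subset_Icc h hr.le) fun he => ?_
    have hm : r u ∈ Set.Icc (l v) (r v) := he.symm ▸ (⟨hlr u, le_rfl⟩ : r u ∈ Set.Icc (l u) (r u))
    exact absurd hm.2 (not_le.mpr hr)
  set n := Fintype.card V with hn
  let e := Fintype.equivFin V
  let f : V → Lex (ℝ × Fin n) := fun v => toLex (l v, e v)
  have hf : Function.Injective f := by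
    intro a b h
    have : (l a, e a) = (l b, e b) := h
    exact e.injective (congrArg Prod.snd this)
  letI : LinearOrder V := LinearOrder.lift' f hf
  let σ : V ≃ Fin n := (monoEquivOfFin V rfl).symm.toEquiv
  have hσ : ∀ u v : V, σ u < σ v → l u ≤ l v := by
    intro u v h
    have h2 : u < v := by
      have := (monoEquivOfFin V rfl).symm.lt_iff_lt.mp h
      exact this
    have h3 : f u < f v := h2
    rcases Prod.Lex.lt_iff.mp h3 with h4 | h4
    · exact le_of_lt h4
    · exact le_of_eq h4.1
  refine ⟨σ, fun u v w huv hvw hadjuw => ?_⟩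
  have huv' : u ≠ v := fun h => by simp [h] at huv
  have hvw' : v ≠ w := fun h => by simp [h] at hvw
  have l1 : l u ≤ l v := hσ u v huv
  have l2 : l v ≤ l w := hσ v w hvw
  have r1 : r u ≤ r v := mono u v l1
  have r2 : r v ≤ r w := mono v w l2
  have hne : u ≠ w := G.ne_of_adj hadjuw
  have hint := (hadj u w hne).mp hadjuw
  rw [Set.Icc_inter_Icc, Set.nonempty_Icc] at hint
  have key : l w ≤ r u := le_trans (le_max_right _ _) (hint.trans (min_le_left _ _))
  constructor
  · rw [hadj u v huv', Set.Icc_inter_Icc, Set.nonempty_Icc]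
    simp only [max_le_iff, le_min_iff]
    refine ⟨⟨?_, ?_⟩, ?_, ?_⟩ <;> linarith [hlr u, hlr v]
  · rw [hadj v w hvw', Set.Icc_inter_Icc, Set.nonempty_Icc]
    simp only [max_le_iff, le_min_iff]
    refine ⟨⟨?_, ?_⟩, ?_, ?_⟩ <;> linarith [hlr v, hlr w]
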